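/- Let F be a non-anticipative functional continuous at fixed times (in d_∞ metric), and (X, A) a process with continuous paths adapted to a filtration F_t. Then the piecewise-constant approximations Xⁿ, Aⁿ built on the dyadic partition tᵏₙ = kT/2ⁿ satisfy: Yⁿ(t) = F_t(Xⁿ_t, Aⁿ_t) is F_t-measurable for each n, Yⁿ(t) → F_t(X_t,A_t) almost surely, and hence Y(t) = F_t(X_t,A_t) is F_t-measurable; i.e. Y is an adapted process. -/

import Mathlib

open Filter Set MeasureTheory Function

noncomputable section

/-- Horizontal extension of a path beyond time `t` by its value at `t`. -/
def hext {E : Type*} (x : ℝ → E) (t : ℝ) : ℝ → E := fun u => x (min u t)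

/-- Vertical perturbation of a path at time `t` by `e`. -/
def vpert {E : Type*} [Add E] (x : ℝ → E) (t : ℝ) (e : E) : ℝ → E :=
  fun u => if u = t then x t + e else x u

/-- The stopped path `x_{t-}`: equal to `x` before `t`, and to the left limit `x(t-)` from `t` on. -/
def stoppedPath {E : Type*} [TopologicalSpace E] (x : ℝ → E) (t : ℝ) : ℝ → E :=
  fun u => if u < t then x u else Function.leftLim x t

/-- A path is cadlag: right-continuous with left limits. -/
def Cadlag {E : Type*} [TopologicalSpace E] (x : ℝ → E) : Prop :=
  (∀ t : ℝ, ContinuousWithinAt x (Set.Ici t) t) ∧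
    ∀ t : ℝ, Filter.Tendsto x (nhdsWithin t (Set.Iio t)) (nhds (Function.leftLim x t))

/-- The distance `d_∞` between `(x,v)` viewed as paths on `[0,t]` and `(x',v')` viewed as
paths on `[0,t-h]`, the latter being horizontally extended to `[0,t]`. -/
def dInfty {E V : Type*} [NormedAddCommGroup E] [NormedAddCommGroup V]
    (t h : ℝ) (x : ℝ → E) (v : ℝ → V) (x' : ℝ → E) (v' : ℝ → V) : ℝ :=
  (⨆ u : Set.Icc (0:ℝ) t, ‖hext x' (t - h) u.1 - x u.1‖)
    + (⨆ u : Set.Icc (0:ℝ) t, ‖hext v' (t - h) u.1 - v u.1‖) + h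

/-- A non-anticipative functional is left-continuous (class `𝔽C^{0,0}_l`). -/
def LeftContinuousNAF {E V : Type*} [NormedAddCommGroup E] [NormedAddCommGroup V]
    (F : ℝ → (ℝ → E) → (ℝ → V) → ℝ) (T : ℝ) : Prop :=
  ∀ t ∈ Set.Icc (0:ℝ) T, ∀ (x : ℝ → E) (v : ℝ → V), ∀ ε > 0, ∃ η > 0,
    ∀ h ∈ Set.Icc (0:ℝ) t, ∀ (x' : ℝ → E) (v' : ℝ → V),
      dInfty t h x v x' v' < η → |F t x v - F (t - h) x' v'| < ε

/-- The horizontal derivative of a non-anticipative functional at `(x,v)` at time `t` is `L`. -/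
def horizDerivAt {E V : Type*} (F : ℝ → (ℝ → E) → (ℝ → V) → ℝ)
    (t : ℝ) (x : ℝ → E) (v : ℝ → V) (L : ℝ) : Prop :=
  Filter.Tendsto (fun h => (F (t + h) (hext x t) (hext v t) - F t x v) / h)
    (nhdsWithin 0 (Set.Ioi 0)) (nhds L)

/-- Piecewise-constant dyadic approximation of a path on `[0,T]`, built on the partition
`tᵏₙ = k T / 2ⁿ`. -/
def dyadicApprox {α : Type*} (T : ℝ) (n : ℕ) (x : ℝ → α) : ℝ → α :=
  fun u => if u = T then x T else x ((⌊u * 2 ^ n / T⌋ : ℤ) * T / 2 ^ n)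

/-- if `F` is a non-anticipative functional continuous at fixed times in the
`d_∞` metric and `(X,A)` is adapted with continuous paths, then the dyadic approximations
`Yⁿ(t) = F_t(Xⁿ_t,Aⁿ_t)` are `ℱ_t`-measurable, converge pointwise to `Y(t) = F_t(X_t,A_t)`,
and hence `Y(t)` is `ℱ_t`-measurable, i.e. `Y` is adapted. -/
lemma dyadic_bounds {T : ℝ} (hT : 0 < T) (n : ℕ) {u : ℝ} (hu : 0 ≤ u) :
    0 ≤ (⌊u * 2 ^ n / T⌋ : ℝ) * T / 2 ^ n ∧ (⌊u * 2 ^ n / T⌋ : ℝ) * T / 2 ^ n ≤ u ∧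
      u - T / 2 ^ n < (⌊u * 2 ^ n / T⌋ : ℝ) * T / 2 ^ n := by
  have h2 : (0:ℝ) < 2 ^ n := by positivity
  have hy : 0 ≤ u * 2 ^ n / T := by positivity
  have h0 : (0:ℝ) ≤ (⌊u * 2 ^ n / T⌋ : ℝ) := by exact_mod_cast Int.floor_nonneg.mpr hy
  have hle : (⌊u * 2 ^ n / T⌋ : ℝ) ≤ u * 2 ^ n / T := Int.floor_le _
  have hlt : u * 2 ^ n / T - 1 < (⌊u * 2 ^ n / T⌋ : ℝ) := Int.sub_one_lt_floor _
  refine ⟨by positivity, ?_, ?_⟩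
  · rw [div_le_iff₀ h2]
    calc (⌊u * 2 ^ n / T⌋ : ℝ) * T ≤ u * 2 ^ n / T * T :=
          mul_le_mul_of_nonneg_right hle hT.le
      _ = u * 2 ^ n := by field_simp
  · rw [sub_lt_iff_lt_add, ← add_div, lt_div_iff₀ h2]
    have h4 := mul_lt_mul_of_pos_right hlt hT
    have heq : (u * 2 ^ n / T - 1) * T = u * 2 ^ n - T := by field_simp
    nlinarith

lemma dyadicApprox_eq' {α : Type*} {T : ℝ} (hT : 0 < T) (n : ℕ) (x : ℝ → α) (u : ℝ) :
    dyadicApprox T n x u = x ((⌊u * 2 ^ n / T⌋ : ℝ) * T / 2 ^ n) := by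
  unfold dyadicApprox
  split_ifs with h
  · rw [h]
    congr 1
    have h1 : T * 2 ^ n / T = ((2 ^ n : ℤ) : ℝ) := by push_cast; field_simp
    rw [h1, Int.floor_intCast]
    push_cast
    field_simp
  · rfl

theorem statement18 {d : ℕ} {Ω : Type*} {m : MeasurableSpace Ω}
    (ℱ : Filtration ℝ m) (T : ℝ) (hT : 0 < T) (t : ℝ) (ht : t ∈ Set.Icc 0 T)
    (X : ℝ → Ω → (Fin d → ℝ)) (A : ℝ → Ω → (Fin d → Fin d → ℝ))
    (hXadapted : Adapted ℱ X) (hAadapted : Adapted ℱ A)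
    (hXcont : ∀ ω, Continuous fun s => X s ω)
    (hAcont : ∀ ω, Continuous fun s => A s ω)
    (F : ℝ → (ℝ → (Fin d → ℝ)) → (ℝ → (Fin d → Fin d → ℝ)) → ℝ)
    -- `F` is non-anticipative: `F_t` depends only on the restriction of the paths to `[0,t]`:
    (hFna : ∀ (s : ℝ) (x x' : ℝ → (Fin d → ℝ)) (v v' : ℝ → (Fin d → Fin d → ℝ)),
      (∀ u ∈ Set.Icc (0:ℝ) s, x u = x' u) → (∀ u ∈ Set.Icc (0:ℝ) s, v u = v' u) →
      F s x v = F s x' v')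
    -- `F` is continuous at fixed times for the `d_∞` metric:
    (hFcont : ∀ (x : ℝ → (Fin d → ℝ)) (v : ℝ → (Fin d → Fin d → ℝ)), ∀ ε > 0, ∃ η > 0,
      ∀ (x' : ℝ → (Fin d → ℝ)) (v' : ℝ → (Fin d → Fin d → ℝ)),
        dInfty t 0 x v x' v' < η → |F t x v - F t x' v'| < ε) :
    (∀ n : ℕ, Measurable[ℱ t] fun ω =>
      F t (dyadicApprox T n (fun s => X s ω)) (dyadicApprox T n (fun s => A s ω))) ∧
    (∀ ω : Ω, Filter.Tendsto (fun n =>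
        F t (dyadicApprox T n (fun s => X s ω)) (dyadicApprox T n (fun s => A s ω)))
      Filter.atTop (nhds (F t (fun s => X s ω) (fun s => A s ω)))) ∧
    Measurable[ℱ t] fun ω => F t (fun s => X s ω) (fun s => A s ω) := by
  obtain ⟨ht0, htT⟩ := ht
  have h2 : ∀ n : ℕ, (0:ℝ) < 2 ^ n := fun n => by positivity
  haveI : Nonempty (Icc (0:ℝ) t) := ⟨⟨0, le_refl _, ht0⟩⟩
  -- membership facts about the dyadic grid points
  have hr_mem : ∀ (n : ℕ), ∀ u ∈ Icc (0:ℝ) t,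
      (⌊u * 2 ^ n / T⌋ : ℝ) * T / 2 ^ n ∈ Icc (0:ℝ) t ∧
      (⌊u * 2 ^ n / T⌋ : ℝ) * T / 2 ^ n ≤ u ∧
      u - T / 2 ^ n < (⌊u * 2 ^ n / T⌋ : ℝ) * T / 2 ^ n := by
    intro n u hu
    obtain ⟨a, b, c⟩ := dyadic_bounds hT n hu.1
    exact ⟨⟨a, b.trans hu.2⟩, b, c⟩
  -- Part 1: measurability of the approximations
  have hmeas : ∀ n : ℕ, Measurable[ℱ t] fun ω =>
      F t (dyadicApprox T n (fun s => X s ω)) (dyadicApprox T n (fun s => A s ω)) := by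
    intro n
    set τ : ℤ → ℝ := fun k => min (max ((k : ℝ) * T / 2 ^ n) 0) t with hτdef
    have hτle : ∀ k, τ k ≤ t := fun k => min_le_right _ _
    set H : ((ℤ → (Fin d → ℝ)) × (ℤ → (Fin d → Fin d → ℝ))) → ℝ :=
      fun p => F t (fun u => p.1 ⌊u * 2 ^ n / T⌋) (fun u => p.2 ⌊u * 2 ^ n / T⌋) with hHdef
    set g : Ω → ((ℤ → (Fin d → ℝ)) × (ℤ → (Fin d → Fin d → ℝ))) :=
      fun ω => (fun k => X (τ k) ω, fun k => A (τ k) ω) with hgdef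
    have hkey : ∀ u ∈ Icc (0:ℝ) t, τ ⌊u * 2 ^ n / T⌋ = (⌊u * 2 ^ n / T⌋ : ℝ) * T / 2 ^ n := by
      intro u hu
      obtain ⟨⟨h0, hle⟩, -, -⟩ := hr_mem n u hu
      simp only [hτdef]
      rw [max_eq_left h0, min_eq_left hle]
    have heq : (fun ω =>
        F t (dyadicApprox T n (fun s => X s ω)) (dyadicApprox T n (fun s => A s ω))) = H ∘ g := by
      funext ω
      simp only [Function.comp, hHdef, hgdef]
      apply hFna
      · intro u hu
        rw [dyadicApprox_eq' hT, hkey u hu]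
      · intro u hu
        rw [dyadicApprox_eq' hT, hkey u hu]
    rw [heq]
    have hgmeas : Measurable[ℱ t] g := by
      refine Measurable.prodMk ?_ ?_
      · exact @measurable_pi_lambda _ _ _ (ℱ t) _ _
          (fun k => ((hXadapted (τ k)).mono (ℱ.mono (hτle k)) le_rfl))
      · exact @measurable_pi_lambda _ _ _ (ℱ t) _ _
          (fun k => ((hAadapted (τ k)).mono (ℱ.mono (hτle k)) le_rfl))
    have hHcont : Continuous H := by
      rw [continuous_iff_continuousAt]
      intro p
      rw [ContinuousAt, Metric.tendsto_nhds]
      intro ε hε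
      obtain ⟨η, hη0, hη⟩ :=
        hFcont (fun u => p.1 ⌊u * 2 ^ n / T⌋) (fun u => p.2 ⌊u * 2 ^ n / T⌋) ε hε
      have hev : ∀ᶠ q in nhds p, ∀ k ∈ Finset.Icc (0:ℤ) ⌊t * 2 ^ n / T⌋,
          dist (q.1 k) (p.1 k) < η / 3 ∧ dist (q.2 k) (p.2 k) < η / 3 := by
        rw [eventually_all_finset]
        intro k _
        have h1 : Tendsto (fun q : ((ℤ → (Fin d → ℝ)) × (ℤ → (Fin d → Fin d → ℝ))) => q.1 k)
            (nhds p) (nhds (p.1 k)) := ((continuous_apply k).comp continuous_fst).continuousAt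
        have h2' : Tendsto (fun q : ((ℤ → (Fin d → ℝ)) × (ℤ → (Fin d → Fin d → ℝ))) => q.2 k)
            (nhds p) (nhds (p.2 k)) := ((continuous_apply k).comp continuous_snd).continuousAt
        exact (Metric.tendsto_nhds.mp h1 _ (by positivity)).and
          (Metric.tendsto_nhds.mp h2' _ (by positivity))
      filter_upwards [hev] with q hq
      rw [Real.dist_eq, abs_sub_comm]
      apply hη
      have hfm : ∀ u : Icc (0:ℝ) t, ⌊u.1 * 2 ^ n / T⌋ ∈ Finset.Icc (0:ℤ) ⌊t * 2 ^ n / T⌋ := by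
        intro u
        refine Finset.mem_Icc.mpr ⟨?_, ?_⟩
        · exact Int.floor_nonneg.mpr (div_nonneg (mul_nonneg u.2.1 (by positivity)) hT.le)
        · exact Int.floor_le_floor (by gcongr; exact u.2.2)
      unfold dInfty
      have hx1 : ∀ u : Icc (0:ℝ) t,
          hext (fun u => q.1 ⌊u * 2 ^ n / T⌋) (t - 0) u.1 = q.1 ⌊u.1 * 2 ^ n / T⌋ := by
        intro u
        unfold hext
        rw [sub_zero, min_eq_left u.2.2]
      have hx2 : ∀ u : Icc (0:ℝ) t,
          hext (fun u => q.2 ⌊u * 2 ^ n / T⌋) (t - 0) u.1 = q.2 ⌊u.1 * 2 ^ n / T⌋ := by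
        intro u
        unfold hext
        rw [sub_zero, min_eq_left u.2.2]
      have e1 : (⨆ u : Icc (0:ℝ) t, ‖hext (fun u => q.1 ⌊u * 2 ^ n / T⌋) (t - 0) u.1
          - p.1 ⌊u.1 * 2 ^ n / T⌋‖) ≤ η / 3 := by
        refine ciSup_le fun u => ?_
        rw [hx1 u, ← dist_eq_norm]
        exact (hq _ (hfm u)).1.le
      have e2 : (⨆ u : Icc (0:ℝ) t, ‖hext (fun u => q.2 ⌊u * 2 ^ n / T⌋) (t - 0) u.1
          - p.2 ⌊u.1 * 2 ^ n / T⌋‖) ≤ η / 3 := by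
        refine ciSup_le fun u => ?_
        rw [hx2 u, ← dist_eq_norm]
        exact (hq _ (hfm u)).2.le
      linarith
    exact (hHcont.measurable).comp hgmeas
  -- Part 2: pointwise convergence
  have hconv : ∀ ω : Ω, Filter.Tendsto (fun n =>
      F t (dyadicApprox T n (fun s => X s ω)) (dyadicApprox T n (fun s => A s ω)))
      Filter.atTop (nhds (F t (fun s => X s ω) (fun s => A s ω))) := by
    intro ω
    rw [Metric.tendsto_atTop]
    intro ε hε
    obtain ⟨η, hη0, hη⟩ := hFcont (fun s => X s ω) (fun s => A s ω) ε hε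
    have hucX := Metric.uniformContinuousOn_iff.mp
      (isCompact_Icc.uniformContinuousOn_of_continuous
        ((hXcont ω).continuousOn : ContinuousOn _ (Icc (0:ℝ) t)))
    have hucA := Metric.uniformContinuousOn_iff.mp
      (isCompact_Icc.uniformContinuousOn_of_continuous
        ((hAcont ω).continuousOn : ContinuousOn _ (Icc (0:ℝ) t)))
    obtain ⟨δ₁, hδ₁, hXc⟩ := hucX (η / 3) (by positivity)
    obtain ⟨δ₂, hδ₂, hAc⟩ := hucA (η / 3) (by positivity)
    have hδ0 : 0 < min δ₁ δ₂ := lt_min hδ₁ hδ₂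
    obtain ⟨N, hN⟩ : ∃ N : ℕ, T / min δ₁ δ₂ < 2 ^ N := pow_unbounded_of_one_lt _ one_lt_two
    refine ⟨N, fun n hn => ?_⟩
    have hTn : T / 2 ^ n < min δ₁ δ₂ := by
      have hp : (2:ℝ) ^ N ≤ 2 ^ n := pow_le_pow_right₀ one_le_two hn
      have : T / 2 ^ n ≤ T / 2 ^ N := by gcongr
      refine this.trans_lt ?_
      rw [div_lt_iff₀ (h2 N)]
      rw [div_lt_iff₀ hδ0] at hN
      linarith
    rw [Real.dist_eq, abs_sub_comm]
    apply hη
    unfold dInfty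
    have e1 : (⨆ u : Icc (0:ℝ) t, ‖hext (dyadicApprox T n (fun s => X s ω)) (t - 0) u.1
        - X u.1 ω‖) ≤ η / 3 := by
      refine ciSup_le fun u => ?_
      obtain ⟨hmem, hleu, hclose⟩ := hr_mem n u.1 u.2
      have hx : hext (dyadicApprox T n (fun s => X s ω)) (t - 0) u.1
          = X ((⌊u.1 * 2 ^ n / T⌋ : ℝ) * T / 2 ^ n) ω := by
        unfold hext
        rw [sub_zero, min_eq_left u.2.2, dyadicApprox_eq' hT]
      rw [hx, ← dist_eq_norm]
      refine (hXc _ hmem u.1 u.2 ?_).le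
      rw [Real.dist_eq, abs_sub_comm, abs_of_nonneg (by linarith)]
      linarith [min_le_left δ₁ δ₂]
    have e2 : (⨆ u : Icc (0:ℝ) t, ‖hext (dyadicApprox T n (fun s => A s ω)) (t - 0) u.1
        - A u.1 ω‖) ≤ η / 3 := by
      refine ciSup_le fun u => ?_
      obtain ⟨hmem, hleu, hclose⟩ := hr_mem n u.1 u.2
      have hx : hext (dyadicApprox T n (fun s => A s ω)) (t - 0) u.1
          = A ((⌊u.1 * 2 ^ n / T⌋ : ℝ) * T / 2 ^ n) ω := by
        unfold hext
        rw [sub_zero, min_eq_left u.2.2, dyadicApprox_eq' hT]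
      rw [hx, ← dist_eq_norm]
      refine (hAc _ hmem u.1 u.2 ?_).le
      rw [Real.dist_eq, abs_sub_comm, abs_of_nonneg (by linarith)]
      linarith [min_le_right δ₁ δ₂]
    linarith
  -- Part 3: limit is measurable
  exact ⟨hmeas, hconv, @measurable_of_tendsto_metrizable _ _ (ℱ t) _ _ _ _ _ _ hmeas (tendsto_pi_nhds.mpr hconv)⟩
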